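/- Conjugacy of F with the interval map outside the middle cone (Lemma 2.1). Let z ∈ ℍ \ P_c satisfy Im z > 0, Re z + Im z·cot β ∈ [−1, λ], and ℓ := 2·Im z·cot β ≤ λ. Set s(x) = x + 1 + ℓ/2. Then for every n ∈ ℕ with n ≤ k(z) (i.e. such that F^m(z) ∉ P_c for all 1 ≤ m < n), one has F^n(z) = g_ℓ^n(s(Re z)) − 1 − ℓ/2 + i·Im z. -/

import Mathlib

open Complex Real Set
open scoped Classical

noncomputable section

/-- The reciprocal golden ratio Φ = (√5 − 1)/2. -/
def Phi : ℝ := (Real.sqrt 5 - 1) / 2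

/-- β = (π − |α|)/2. -/
def beta {d : ℕ} (α : Fin d → ℝ) : ℝ := (π - ∑ k, α k) / 2

/-- σ_j = β + α_1 + … + α_j (partial sums of the angles, shifted by β). -/
def sig {d : ℕ} (α : Fin d → ℝ) (j : ℕ) : ℝ :=
  beta α + ∑ k ∈ Finset.univ.filter (fun k : Fin d => (k : ℕ) < j), α k

/-- θ_j = Σ_{τ(k)<τ(j)} α_k − Σ_{k<j} α_k. -/
def theta {d : ℕ} (α : Fin d → ℝ) (τ : Equiv.Perm (Fin d)) (j : Fin d) : ℝ :=
  (∑ k ∈ Finset.univ.filter (fun k : Fin d => τ k < τ j), α k)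
  - ∑ k ∈ Finset.univ.filter (fun k : Fin d => k < j), α k

/-- The cone P_0 = {z ∈ ℍ : arg z ∈ [0, β)}. -/
def P0 {d : ℕ} (α : Fin d → ℝ) : Set ℂ :=
  {z : ℂ | 0 ≤ z.im ∧ 0 ≤ z.arg ∧ z.arg < beta α}

/-- The middle cones P_1, …, P_d (0-indexed by `j : Fin d`):
P_1 corresponds to arg ∈ [β, β+α_1], and P_j (j ≥ 2) to arg ∈ (σ_{j−1}, σ_j]. -/
def Pmid {d : ℕ} (α : Fin d → ℝ) (j : Fin d) : Set ℂ :=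
  {z : ℂ | 0 ≤ z.im ∧
    (if (j : ℕ) = 0 then sig α 0 ≤ z.arg else sig α (j : ℕ) < z.arg) ∧
    z.arg ≤ sig α ((j : ℕ) + 1)}

/-- The cone P_{d+1} = {z ∈ ℍ : arg z ∈ (π−β, π]}. -/
def Pend {d : ℕ} (α : Fin d → ℝ) : Set ℂ :=
  {z : ℂ | 0 ≤ z.im ∧ π - beta α < z.arg ∧ z.arg ≤ π}

/-- The middle cone P_c = P_1 ∪ … ∪ P_d. -/
def Pc {d : ℕ} (α : Fin d → ℝ) : Set ℂ := ⋃ j, Pmid α j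

/-- The exchange map E. -/
def Emap {d : ℕ} (α : Fin d → ℝ) (τ : Equiv.Perm (Fin d)) (z : ℂ) : ℂ :=
  if h : ∃ j, z ∈ Pmid α j then
    z * Complex.exp ((theta α τ h.choose : ℝ) * Complex.I)
  else z

/-- The translation map G. -/
def Gmap {d : ℕ} (α : Fin d → ℝ) (lam eta : ℝ) (z : ℂ) : ℂ :=
  if z ∈ P0 α then z - 1
  else if z ∈ Pend α then z + (lam : ℂ)
  else if z ∈ Pc α then z - (eta : ℂ)
  else z

/-- The translated cone exchange F = G ∘ E. -/
def Fmap {d : ℕ} (α : Fin d → ℝ) (τ : Equiv.Perm (Fin d)) (lam eta : ℝ) (z : ℂ) : ℂ :=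
  Gmap α lam eta (Emap α τ z)

/-- The set of positive times at which the orbit of z visits P_c. -/
def hitSet {d : ℕ} (α : Fin d → ℝ) (τ : Equiv.Perm (Fin d)) (lam eta : ℝ) (z : ℂ) : Set ℕ :=
  {n : ℕ | 0 < n ∧ (Fmap α τ lam eta)^[n] z ∈ Pc α}

/-- The first hitting time k(z) of z to P_c (0 if the orbit never returns). -/
def hitTime {d : ℕ} (α : Fin d → ℝ) (τ : Equiv.Perm (Fin d)) (lam eta : ℝ) (z : ℂ) : ℕ :=
  sInf (hitSet α τ lam eta z)

/-- The first return map R(z) = F^{k(z)}(z). -/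
def Rmap {d : ℕ} (α : Fin d → ℝ) (τ : Equiv.Perm (Fin d)) (lam eta : ℝ) (z : ℂ) : ℂ :=
  (Fmap α τ lam eta)^[hitTime α τ lam eta z] z

/-- The interval map g_ℓ with middle interval (1, 1+ℓ) of fixed points:
g_ℓ(x) = x+λ on [0,1], x on (1,1+ℓ), x−1 on [1+ℓ, 1+λ]. -/
def gl (lam l x : ℝ) : ℝ :=
  if x ≤ 1 then x + lam else if x < 1 + l then x else x - 1

/-- The interval exchange g(x) = x+λ on [0,1], x−1 on (1, 1+λ]. -/
def g0 (lam x : ℝ) : ℝ := if x ≤ 1 then x + lam else x - 1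

/-- The set of positive times at which the g_ℓ-orbit of x visits [1, 1+ℓ]. -/
def hitSetI (lam l x : ℝ) : Set ℕ :=
  {n : ℕ | 0 < n ∧ (gl lam l)^[n] x ∈ Set.Icc 1 (1 + l)}

/-- The first hitting time n_ℓ(x) of x to [1, 1+ℓ] (as a natural number; 0 if
the orbit never hits). -/
def nhit (lam l x : ℝ) : ℕ := sInf (hitSetI lam l x)

/-- The first hitting time n_ℓ(x) of x to [1, 1+ℓ], with value ∞ ∈ ℕ∪{∞} if the
orbit never hits. -/
def nhitE (lam l x : ℝ) : ℕ∞ := sInf ((fun n : ℕ => (n : ℕ∞)) '' hitSetI lam l x)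

/-- The first hitting map r_ℓ(x) = g_ℓ^{n_ℓ(x)}(x). -/
def rmap (lam l x : ℝ) : ℝ := (gl lam l)^[nhit lam l x] x

/-- r'_ℓ(x) = r_ℓ(x) outside [1,1+ℓ] and x on [1,1+ℓ]. -/
def rmap' (lam l x : ℝ) : ℝ := if x ∈ Set.Icc 1 (1 + l) then x else rmap lam l x

/-- The left bifurcation set Λ_L (hitting times compared in ℕ∪{∞}). -/
def LamL (lam : ℝ) : Set ℝ :=
  {l | 0 < l ∧ l ≤ lam ∧ ∀ l' : ℝ, 0 < l' → l' < l → nhitE lam l 1 < nhitE lam l' 1}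

/-- The right bifurcation set Λ_R (hitting times compared in ℕ∪{∞}). -/
def LamR (lam : ℝ) : Set ℝ :=
  {l | 0 < l ∧ l ≤ lam ∧
    ∀ l' : ℝ, 0 < l' → l' < l → nhitE lam l (1 + l) < nhitE lam l' (1 + l')}




-- sign lemma: for t in (b-π, b) with 0<b<π: 0 < sin t ↔ 0 < t
lemma sin_pos_iff_aux {t b : ℝ} (hb0 : 0 < b) (hbπ : b < π) (h1 : b - π < t) (h2 : t < b) :
    0 < Real.sin t ↔ 0 < t := by
  constructor
  · intro hs
    by_contra hle
    push_neg at hle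
    have : Real.sin (-t) ≥ 0 :=
      Real.sin_nonneg_of_nonneg_of_le_pi (by linarith) (by linarith)
    rw [Real.sin_neg] at this; linarith
  · intro ht
    exact Real.sin_pos_of_pos_of_lt_pi ht (by linarith)

lemma arg_lt_iff (w : ℂ) (hw : 0 < w.im) (b : ℝ) (hb0 : 0 < b) (hbπ : b < π) :
    w.arg < b ↔ w.im * Real.cos b < w.re * Real.sin b := by
  have hw0 : w ≠ 0 := fun h => by simp [h] at hw
  have habs : 0 < ‖w‖ := norm_pos_iff.mpr hw0
  have hargpos : 0 < w.arg := by
    rcases lt_or_eq_of_le (Complex.arg_nonneg_iff.2 hw.le) with h | h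
    · exact h
    · exact absurd (Complex.arg_eq_zero_iff.1 h.symm).2 (ne_of_gt hw)
  have hargpi : w.arg < π := Complex.arg_lt_pi_iff.2 (Or.inr (ne_of_gt hw))
  have hsin : Real.sin (b - w.arg) =
      (w.re * Real.sin b - w.im * Real.cos b) / ‖w‖ := by
    rw [Real.sin_sub, Complex.sin_arg, Complex.cos_arg hw0]
    field_simp
  have key : (0 < Real.sin (b - w.arg)) ↔ 0 < b - w.arg :=
    sin_pos_iff_aux hb0 hbπ (by linarith) (by linarith)
  rw [hsin, div_pos_iff_of_pos_right habs] at key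
  constructor
  · intro h; linarith [key.2 (by linarith)]
  · intro h; linarith [key.1 (by linarith)]

lemma pi_sub_lt_arg_iff (w : ℂ) (hw : 0 < w.im) (b : ℝ) (hb0 : 0 < b) (hbπ : b < π) :
    π - b < w.arg ↔ w.re * Real.sin b < -(w.im * Real.cos b) := by
  have hw0 : w ≠ 0 := fun h => by simp [h] at hw
  have habs : 0 < ‖w‖ := norm_pos_iff.mpr hw0
  have hargpos : 0 < w.arg := by
    rcases lt_or_eq_of_le (Complex.arg_nonneg_iff.2 hw.le) with h | h
    · exact h
    · exact absurd (Complex.arg_eq_zero_iff.1 h.symm).2 (ne_of_gt hw)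
  have hargpi : w.arg < π := Complex.arg_lt_pi_iff.2 (Or.inr (ne_of_gt hw))
  have hsin : Real.sin (w.arg - (π - b)) =
      (-(w.im * Real.cos b) - w.re * Real.sin b) / ‖w‖ := by
    have : w.arg - (π - b) = (w.arg + b) - π := by ring
    rw [this, Real.sin_sub, Real.sin_pi, Real.cos_pi, Real.sin_add,
      Complex.sin_arg, Complex.cos_arg hw0]
    field_simp; ring
  have key : (0 < Real.sin (w.arg - (π - b))) ↔ 0 < w.arg - (π - b) :=
    sin_pos_iff_aux hb0 hbπ (by linarith) (by linarith)
  rw [hsin, div_pos_iff_of_pos_right habs] at key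
  constructor
  · intro h; linarith [key.2 (by linarith)]
  · intro h; linarith [key.1 (by linarith)]


section TCEAux

variable {d : ℕ}

lemma sig_zero' (α : Fin d → ℝ) : sig α 0 = beta α := by
  simp [sig]

lemma sig_mono' (α : Fin d → ℝ) (hpos : ∀ j, 0 < α j) (m : ℕ) :
    sig α m ≤ sig α (m + 1) := by
  unfold sig
  have : (Finset.univ.filter (fun k : Fin d => (k : ℕ) < m)) ⊆
      (Finset.univ.filter (fun k : Fin d => (k : ℕ) < m + 1)) := by
    intro k hk
    simp only [Finset.mem_filter] at *
    exact ⟨hk.1, by omega⟩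
  have := Finset.sum_le_sum_of_subset_of_nonneg this (fun i _ _ => (hpos i).le)
  linarith

lemma sig_d' (α : Fin d → ℝ) : sig α d = π - beta α := by
  unfold sig
  have h : (Finset.univ.filter (fun k : Fin d => (k : ℕ) < d)) = Finset.univ := by
    apply Finset.filter_true_of_mem
    intro k _
    exact k.is_lt
  rw [h]
  unfold beta
  ring

lemma mem_Pc_of_arg (hd : 1 ≤ d) (α : Fin d → ℝ) (hpos : ∀ j, 0 < α j) (w : ℂ)
    (him : 0 ≤ w.im) (h1 : beta α ≤ w.arg) (h2 : w.arg ≤ π - beta α) : w ∈ Pc α := by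
  have key : ∀ m : ℕ, m ≤ d → w.arg ≤ sig α m → w ∈ Pc α := by
    intro m
    induction m with
    | zero =>
      intro _ h0
      refine Set.mem_iUnion.2 ⟨⟨0, hd⟩, ?_⟩
      simp only [Pmid, Set.mem_setOf_eq]
      refine ⟨him, ?_, ?_⟩
      · simp only [if_true]; rw [sig_zero']; exact h1
      · calc w.arg ≤ sig α 0 := h0
          _ ≤ sig α 1 := sig_mono' α hpos 0
    | succ m ih =>
      intro hm hle
      by_cases h : w.arg ≤ sig α m
      · exact ih (by omega) h
      · push_neg at h
        refine Set.mem_iUnion.2 ⟨⟨m, by omega⟩, ?_⟩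
        simp only [Pmid, Set.mem_setOf_eq]
        refine ⟨him, ?_, hle⟩
        by_cases hm0 : m = 0
        · subst hm0
          rw [if_pos rfl, sig_zero']
          exact h1
        · rw [if_neg hm0]; exact h
  exact key d le_rfl (by rw [sig_d']; exact h2)

lemma Fmap_step (hd : 1 ≤ d) (α : Fin d → ℝ) (hpos : ∀ j, 0 < α j)
    (hsum : ∑ k, α k < π) (τ : Equiv.Perm (Fin d)) (lam eta : ℝ)
    (h : ℝ) (hh : 0 < h) (l : ℝ)
    (hldef : l = 2 * h * (Real.cos (beta α) / Real.sin (beta α))) (u : ℝ)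
    (hPc : (Complex.ofReal (u - 1 - l / 2) + Complex.ofReal h * Complex.I) ∉ Pc α) :
    Fmap α τ lam eta (Complex.ofReal (u - 1 - l / 2) + Complex.ofReal h * Complex.I)
      = Complex.ofReal (gl lam l u - 1 - l / 2) + Complex.ofReal h * Complex.I := by
  set w : ℂ := Complex.ofReal (u - 1 - l / 2) + Complex.ofReal h * Complex.I with hwdef
  have hwre : w.re = u - 1 - l / 2 := by simp [hwdef]
  have hwim : w.im = h := by simp [hwdef]
  have hwim' : 0 < w.im := by rw [hwim]; exact hh
  have : Nonempty (Fin d) := ⟨⟨0, hd⟩⟩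
  have hsumpos : 0 < ∑ k, α k := Finset.sum_pos (fun i _ => hpos i) Finset.univ_nonempty
  have hb0 : 0 < beta α := by unfold beta; linarith
  have hbpi2 : beta α < π / 2 := by unfold beta; linarith
  have hbpi : beta α < π := by linarith [Real.pi_pos]
  have hsinb : 0 < Real.sin (beta α) := Real.sin_pos_of_pos_of_lt_pi hb0 hbpi
  have hcosb : 0 < Real.cos (beta α) := Real.cos_pos_of_mem_Ioo ⟨by linarith, hbpi2⟩
  have hl0 : 0 < l := by rw [hldef]; positivity
  have hlh : h * Real.cos (beta α) = (l / 2) * Real.sin (beta α) := by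
    rw [hldef]; field_simp
  have hE : Emap α τ w = w := by
    unfold Emap
    rw [dif_neg]
    rintro ⟨j, hj⟩
    exact hPc (Set.mem_iUnion.2 ⟨j, hj⟩)
  have hnotmid : ¬ (beta α ≤ w.arg ∧ w.arg ≤ π - beta α) := fun h' =>
    hPc (mem_Pc_of_arg hd α hpos w hwim'.le h'.1 h'.2)
  by_cases hcase : w.arg < beta α
  · -- w ∈ P0, u > 1 + l
    have hu : 1 + l < u := by
      have hx := (arg_lt_iff w hwim' _ hb0 hbpi).1 hcase
      rw [hwre, hwim] at hx
      nlinarith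
    have hP0 : w ∈ P0 α := by
      simp only [P0, Set.mem_setOf_eq]
      exact ⟨hwim'.le, Complex.arg_nonneg_iff.2 hwim'.le, hcase⟩
    have hgl : gl lam l u = u - 1 := by
      unfold gl
      rw [if_neg (by linarith), if_neg (by linarith)]
    rw [Fmap, hE]
    unfold Gmap
    rw [if_pos hP0, hgl, hwdef]
    push_cast
    ring
  · -- w ∈ Pend, u < 1
    have hgt : π - beta α < w.arg := by
      rcases not_and_or.mp hnotmid with h' | h'
      · push_neg at h'; exact absurd h' hcase
      · push_neg at h'; exact h'
    have hu : u < 1 := by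
      have hx := (pi_sub_lt_arg_iff w hwim' _ hb0 hbpi).1 hgt
      rw [hwre, hwim] at hx
      nlinarith
    have hnotP0 : w ∉ P0 α := by
      simp only [P0, Set.mem_setOf_eq]
      rintro ⟨-, -, h'⟩
      exact hcase h'
    have hPend : w ∈ Pend α := by
      simp only [Pend, Set.mem_setOf_eq]
      exact ⟨hwim'.le, hgt, Complex.arg_le_pi w⟩
    have hgl : gl lam l u = u + lam := by
      unfold gl
      rw [if_pos hu.le]
    rw [Fmap, hE]
    unfold Gmap
    rw [if_neg hnotP0, if_pos hPend, hgl, hwdef]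
    push_cast
    ring

end TCEAux

/-- **Lemma 2.1 (conjugacy of F with the interval map outside the middle cone).**
For z ∈ ℍ \ P_c with Im z > 0, Re z + Im z·cot β ∈ [−1, λ] and
ℓ = 2·Im z·cot β ≤ λ, the iterates of F up to the first hitting time of P_c are
conjugated to iterates of g_ℓ via s(x) = x + 1 + ℓ/2. -/
theorem F_conjugate_to_interval_map
    (d : ℕ) (hd : 1 ≤ d) (α : Fin d → ℝ) (hpos : ∀ j, 0 < α j) (hsum : ∑ k, α k < π)
    (τ : Equiv.Perm (Fin d)) (lam eta : ℝ)
    (hlam : 0 < lam) (hirr : Irrational lam) (heta0 : 0 < eta) (hetal : eta < lam)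
    (z : ℂ) (hz : z ∉ Pc α) (him : 0 < z.im)
    (l : ℝ) (hldef : l = 2 * z.im * (Real.cos (beta α) / Real.sin (beta α)))
    (hre : z.re + z.im * (Real.cos (beta α) / Real.sin (beta α)) ∈ Set.Icc (-1 : ℝ) lam)
    (hl : l ≤ lam)
    (n : ℕ) (hn : ∀ m : ℕ, 1 ≤ m → m < n → (Fmap α τ lam eta)^[m] z ∉ Pc α) :
    (Fmap α τ lam eta)^[n] z =
      Complex.ofReal ((gl lam l)^[n] (z.re + 1 + l / 2) - 1 - l / 2)
        + Complex.ofReal z.im * Complex.I := by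
  induction n with
  | zero =>
    simp only [Function.iterate_zero, id]
    have h0 : z.re + 1 + l / 2 - 1 - l / 2 = z.re := by ring
    rw [h0, Complex.re_add_im]
  | succ n ih =>
    have hprev : ∀ m : ℕ, 1 ≤ m → m < n → (Fmap α τ lam eta)^[m] z ∉ Pc α :=
      fun m h1 h2 => hn m h1 (by omega)
    have hw := ih hprev
    have hwPc : (Fmap α τ lam eta)^[n] z ∉ Pc α := by
      rcases Nat.eq_zero_or_pos n with h0 | h0
      · subst h0; simpa using hz
      · exact hn n h0 (by omega)
    rw [Function.iterate_succ_apply', Function.iterate_succ_apply', hw]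
    exact Fmap_step hd α hpos hsum τ lam eta z.im him l hldef _ (by rw [← hw]; exact hwPc)


end
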